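/- Let H be an infinite-dimensional Hilbert space with orthonormal sequence (e_n), and let (a_n) be positive reals with Σ a_n^{-2} = ∞. Define the weight matrix p_{n,m} = a_m^{-2} / Σ_{j=1}^n a_j^{-2} for m ≤ n and p_{n,m} = 0 for m > n. Then the sequence x_n = a_n e_n is weakly (P,2)-convergent to 0: for every f ∈ H, lim_{n→∞} Σ_{m=1}^n p_{n,m} |⟨x_m, f⟩|² = 0. -/

import Mathlib

open Filter Topology

theorem stmt5 {𝕜 H : Type*} [RCLike 𝕜] [NormedAddCommGroup H] [InnerProductSpace 𝕜 H]
    (e : ℕ → H) (he : Orthonormal 𝕜 e)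
    (a : ℕ → ℝ) (ha : ∀ n, 0 < a n)
    (hdiv : ¬ Summable (fun n => (a n ^ 2)⁻¹)) :
    ∀ f : H, Tendsto (fun n =>
        ∑ m ∈ Finset.range (n + 1),
          ((a m ^ 2)⁻¹ / ∑ j ∈ Finset.range (n + 1), (a j ^ 2)⁻¹) *
            ‖(inner 𝕜 ((a m : 𝕜) • e m) f : 𝕜)‖ ^ 2)
      atTop (𝓝 0) := by
  intro f
  set S : ℕ → ℝ := fun n => ∑ j ∈ Finset.range (n + 1), (a j ^ 2)⁻¹ with hS
  have hSpos : ∀ n, 0 < S n := by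
    intro n
    apply Finset.sum_pos
    · intro i _; exact inv_pos.2 (pow_pos (ha i) 2)
    · exact ⟨0, Finset.mem_range.2 (Nat.succ_pos n)⟩
  have hStop : Tendsto S atTop atTop := by
    have h := (not_summable_iff_tendsto_nat_atTop_of_nonneg
      (f := fun n => (a n ^ 2)⁻¹) (fun n => by positivity)).1 hdiv
    exact h.comp (tendsto_add_atTop_nat 1)
  have hterm : ∀ n, (∑ m ∈ Finset.range (n + 1),
      ((a m ^ 2)⁻¹ / S n) * ‖(inner 𝕜 ((a m : 𝕜) • e m) f : 𝕜)‖ ^ 2)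
      = (∑ m ∈ Finset.range (n + 1), ‖(inner 𝕜 (e m) f : 𝕜)‖ ^ 2) / S n := by
    intro n
    rw [Finset.sum_div]
    apply Finset.sum_congr rfl
    intro m _
    have hnorm : ‖(inner 𝕜 ((a m : 𝕜) • e m) f : 𝕜)‖ ^ 2
        = a m ^ 2 * ‖(inner 𝕜 (e m) f : 𝕜)‖ ^ 2 := by
      rw [inner_smul_left, norm_mul, mul_pow, RCLike.norm_conj, RCLike.norm_ofReal,
        abs_of_pos (ha m)]
    have hne : (a m ^ 2 : ℝ) ≠ 0 := ne_of_gt (pow_pos (ha m) 2)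
    rw [hnorm, div_mul_eq_mul_div, ← mul_assoc, inv_mul_cancel₀ hne, one_mul]
  have hle : ∀ n, (∑ m ∈ Finset.range (n + 1),
      ((a m ^ 2)⁻¹ / S n) * ‖(inner 𝕜 ((a m : 𝕜) • e m) f : 𝕜)‖ ^ 2) ≤ ‖f‖ ^ 2 / S n := by
    intro n
    rw [hterm n]
    gcongr
    exact he.sum_inner_products_le f
  have hnonneg : ∀ n, 0 ≤ (∑ m ∈ Finset.range (n + 1),
      ((a m ^ 2)⁻¹ / S n) * ‖(inner 𝕜 ((a m : 𝕜) • e m) f : 𝕜)‖ ^ 2) := by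
    intro n
    apply Finset.sum_nonneg
    intro m _
    have := (hSpos n).le
    positivity
  have hlim : Tendsto (fun n => ‖f‖ ^ 2 / S n) atTop (𝓝 0) :=
    Tendsto.div_atTop tendsto_const_nhds hStop
  exact squeeze_zero hnonneg hle hlim
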